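/- (Odd case dominance order.) Let $\lambda_0 = (\lambda_0^{(1)} \ge \cdots \ge \lambda_0^{(n-1)} \ge |\lambda_0^{(n)}|)$ and $\mu_0$ be integer vectors of length $n$ satisfying these dominance constraints for type $D_n$, and let $\lambda_1, \mu_1$ be partitions of length $n$. Then $(\lambda_0,\lambda_1) - (\mu_0,\mu_1)$ (viewed as $\sum_i (\lambda_0^{(i)}-\mu_0^{(i)})\varepsilon_i + \sum_j (\lambda_1^{(j)}-\mu_1^{(j)})\delta_j$) lies in the $\mathbb{N}$-span of $R^{N+}_{\bar 1} = \{\varepsilon_i+\delta_j\} \cup \{\varepsilon_i-\delta_j\}_{i<j} \cup \{\delta_i-\varepsilon_j\}_{i\le j}$ if and only if the following hold: all partial sums of the shuffled sequence $(\lambda_1^{(1)}, \lambda_0^{(1)}, \lambda_1^{(2)}, \lambda_0^{(2)}, \ldots)$ up to position $2n-1$ dominate the corresponding partial sums for $(\mu_1^{(1)}, \mu_0^{(1)}, \ldots)$; the full sums $\sum_j \lambda_1^{(j)} + \sum_i \lambda_0^{(i)}$ and $\sum_j \mu_1^{(j)} + \sum_i \mu_0^{(i)}$ differ by a nonnegative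 even integer; and $\sum_j \lambda_1^{(j)} + \sum_{i<n} \lambda_0^{(i)} - \lambda_0^{(n)} \ge \sum_j \mu_1^{(j)} + \sum_{i<n}\mu_0^{(i)} - \mu_0^{(n)}$. -/

import Mathlib

open Finset

/-- The set of odd positive roots of the mixed Borel of `𝔬𝔰𝔭(2n|2n)` (odd case). -/
def oddRset (n : ℕ) (M : Type*) [AddCommGroup M] [Module ℚ M]
    (ε δ : Fin n → M) : Set M :=
  {x | ∃ i j : Fin n, x = ε i + δ j} ∪
  {x | ∃ i j : Fin n, i < j ∧ x = ε i - δ j} ∪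
  {x | ∃ i j : Fin n, i ≤ j ∧ x = δ i - ε j}

/-- Partial sum of the first `k` terms of the shuffled sequence
`(λ₁⁽¹⁾, λ₀⁽¹⁾, λ₁⁽²⁾, λ₀⁽²⁾, …)` (1-based positions). -/
def shuffledPartialSum (n : ℕ) (l1 l0 : Fin n → ℤ) (k : ℕ) : ℤ :=
  (∑ j : Fin n, if 2 * (j : ℕ) + 1 ≤ k then l1 j else 0)
    + (∑ i : Fin n, if 2 * (i : ℕ) + 2 ≤ k then l0 i else 0)



lemma sum_range_double {M : Type*} [AddCommMonoid M] (F : ℕ → M) (n : ℕ) :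
    ∑ p ∈ range (2*n), F p = ∑ p ∈ range n, (F (2*p) + F (2*p+1)) := by
  induction n with
  | zero => simp
  | succ n ih =>
      rw [Nat.mul_succ, sum_range_succ, sum_range_succ, sum_range_succ, ih, add_assoc]

lemma abel_summation {M : Type*} [AddCommGroup M] (q : ℕ → ℤ) (x : ℕ → M) (N : ℕ) :
    ∑ k ∈ range N, q k • x k
      = ∑ k ∈ range N, (∑ j ∈ range (k+1), q j) • (x k - x (k+1))
        + (∑ j ∈ range N, q j) • x N := by
  induction N with
  | zero => simp
  | succ N ih =>
      rw [sum_range_succ, ih, sum_range_succ (fun k => (∑ j ∈ range (k+1), q j) • (x k - x (k+1))),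
        sum_range_succ q, smul_sub, add_smul, add_smul]
      abel

lemma exists_functional {n : ℕ} {M : Type*} [AddCommGroup M] [Module ℚ M]
    {ε δ : Fin n → M} (hli : LinearIndependent ℚ (Sum.elim ε δ))
    (u : Fin n ⊕ Fin n → ℚ) :
    ∃ φ : M →ₗ[ℚ] ℚ, (∀ i, φ (ε i) = u (.inl i)) ∧ (∀ j, φ (δ j) = u (.inr j)) := by
  let B := Module.Basis.span hli
  obtain ⟨g, hg⟩ := LinearMap.exists_extend (B.constr ℚ u)
  refine ⟨g, fun i => ?_, fun j => ?_⟩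
  · have : ε i = ((B (Sum.inl i) : _) : M) := (congrArg Subtype.val (Module.Basis.span_apply hli (Sum.inl i))).symm
    rw [this]
    have := LinearMap.congr_fun hg (B (Sum.inl i))
    simpa [Module.Basis.constr_basis] using this
  · have : δ j = ((B (Sum.inr j) : _) : M) := (congrArg Subtype.val (Module.Basis.span_apply hli (Sum.inr j))).symm
    rw [this]
    have := LinearMap.congr_fun hg (B (Sum.inr j))
    simpa [Module.Basis.constr_basis] using this

lemma closure_nonneg {M : Type*} [AddCommGroup M] [Module ℚ M] {s : Set M}
    (φ : M →ₗ[ℚ] ℚ) (h : ∀ r ∈ s, 0 ≤ φ r) {x : M} (hx : x ∈ AddSubmonoid.closure s) :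
    0 ≤ φ x := by
  induction hx using AddSubmonoid.closure_induction with
  | mem r hr => exact h r hr
  | zero => simp
  | add a b _ _ ha hb => rw [map_add]; linarith

lemma closure_even {M : Type*} [AddCommGroup M] [Module ℚ M] {s : Set M}
    (φ : M →ₗ[ℚ] ℚ) (h : ∀ r ∈ s, ∃ m : ℕ, φ r = 2 * m) {x : M}
    (hx : x ∈ AddSubmonoid.closure s) : ∃ m : ℕ, φ x = 2 * m := by
  induction hx using AddSubmonoid.closure_induction with
  | mem r hr => exact h r hr
  | zero => exact ⟨0, by simp⟩
  | add a b _ _ ha hb =>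
      obtain ⟨p, hp⟩ := ha; obtain ⟨q', hq⟩ := hb
      exact ⟨p + q', by rw [map_add, hp, hq]; push_cast; ring⟩


/-- positions 0-based: even positions are `δ`, odd positions are `ε`. -/
def auxX (n : ℕ) {M : Type*} [AddCommGroup M] (ε δ : Fin n → M) : ℕ → M :=
  fun p => if h : p < 2 * n then
    (if p % 2 = 0 then δ ⟨p / 2, by omega⟩ else ε ⟨p / 2, by omega⟩) else 0

def auxQ (n : ℕ) (a b : Fin n → ℤ) : ℕ → ℤ :=
  fun p => if h : p < 2 * n then
    (if p % 2 = 0 then b ⟨p / 2, by omega⟩ else a ⟨p / 2, by omega⟩) else 0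

lemma auxX_even {n : ℕ} {M : Type*} [AddCommGroup M] (ε δ : Fin n → M) {p : ℕ}
    (hp : p < n) : auxX n ε δ (2 * p) = δ ⟨p, hp⟩ := by
  simp only [auxX]
  rw [dif_pos (by omega), if_pos (by omega)]
  exact congrArg δ (Fin.ext (show 2 * p / 2 = p by omega))

lemma auxX_odd {n : ℕ} {M : Type*} [AddCommGroup M] (ε δ : Fin n → M) {p : ℕ}
    (hp : p < n) : auxX n ε δ (2 * p + 1) = ε ⟨p, hp⟩ := by
  simp only [auxX]
  rw [dif_pos (by omega), if_neg (by omega)]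
  exact congrArg ε (Fin.ext (show (2 * p + 1) / 2 = p by omega))

lemma auxX_top {n : ℕ} {M : Type*} [AddCommGroup M] (ε δ : Fin n → M) {p : ℕ}
    (hp : 2 * n ≤ p) : auxX n ε δ p = 0 := by
  simp only [auxX]; rw [dif_neg (by omega)]

lemma auxQ_even {n : ℕ} (a b : Fin n → ℤ) {p : ℕ} (hp : p < n) :
    auxQ n a b (2 * p) = b ⟨p, hp⟩ := by
  simp only [auxQ]
  rw [dif_pos (by omega), if_pos (by omega)]
  exact congrArg b (Fin.ext (show 2 * p / 2 = p by omega))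

lemma auxQ_odd {n : ℕ} (a b : Fin n → ℤ) {p : ℕ} (hp : p < n) :
    auxQ n a b (2 * p + 1) = a ⟨p, hp⟩ := by
  simp only [auxQ]
  rw [dif_pos (by omega), if_neg (by omega)]
  exact congrArg a (Fin.ext (show (2 * p + 1) / 2 = p by omega))

lemma sum_range_double' {M : Type*} [AddCommMonoid M] (F : ℕ → M) (n : ℕ) :
    ∑ p ∈ range (2*n), F p = ∑ p ∈ range n, (F (2*p) + F (2*p+1)) := by
  induction n with
  | zero => simp
  | succ n ih => rw [Nat.mul_succ, sum_range_succ, sum_range_succ, sum_range_succ, ih, add_assoc]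

lemma auxQ_partial {n : ℕ} (a b : Fin n → ℤ) {K : ℕ} (hK : K ≤ 2 * n) :
    ∑ p ∈ range K, auxQ n a b p
      = (∑ j : Fin n, if 2 * (j : ℕ) + 1 ≤ K then b j else 0)
        + (∑ i : Fin n, if 2 * (i : ℕ) + 2 ≤ K then a i else 0) := by
  have hfil : range K = (range (2 * n)).filter (· < K) := by
    ext p; simp only [mem_filter, mem_range]; omega
  rw [hfil, Finset.sum_filter, sum_range_double' (fun p => if p < K then auxQ n a b p else 0),
    Finset.sum_add_distrib]
  congr 1
  · rw [← Fin.sum_univ_eq_sum_range (fun p => if 2 * p < K then auxQ n a b (2 * p) else 0) n]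
    refine Finset.sum_congr rfl fun j _ => ?_
    by_cases hc : 2 * (j : ℕ) + 1 ≤ K
    · rw [if_pos (by omega), if_pos hc, auxQ_even a b j.isLt]
    · rw [if_neg (by omega), if_neg hc]
  · rw [← Fin.sum_univ_eq_sum_range (fun p => if 2 * p + 1 < K then auxQ n a b (2 * p + 1) else 0) n]
    refine Finset.sum_congr rfl fun i _ => ?_
    by_cases hc : 2 * (i : ℕ) + 2 ≤ K
    · rw [if_pos (by omega), if_pos hc, auxQ_odd a b i.isLt]
    · rw [if_neg (by omega), if_neg hc]

/-- Odd-case dominance order: `(λ₀,λ₁) − (μ₀,μ₁)` is an ℕ-combination of the odd positive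
roots iff the shuffled partial-sum inequalities (1.2) hold. -/
theorem odd_dominance_order_characterization
    (n : ℕ) (hn : 0 < n) (M : Type*) [AddCommGroup M] [Module ℚ M]
    (ε δ : Fin n → M) (hli : LinearIndependent ℚ (Sum.elim ε δ))
    (l0 m0 l1 m1 : Fin n → ℤ)
    (hl0 : ∀ i : ℕ, (h : i + 1 < n) → l0 ⟨i + 1, h⟩ ≤ l0 ⟨i, by omega⟩)
    (hl0' : 2 ≤ n → -l0 ⟨n - 1, by omega⟩ ≤ l0 ⟨n - 2, by omega⟩)
    (hm0 : ∀ i : ℕ, (h : i + 1 < n) → m0 ⟨i + 1, h⟩ ≤ m0 ⟨i, by omega⟩)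
    (hm0' : 2 ≤ n → -m0 ⟨n - 1, by omega⟩ ≤ m0 ⟨n - 2, by omega⟩)
    (hl1 : ∀ i : ℕ, (h : i + 1 < n) → l1 ⟨i + 1, h⟩ ≤ l1 ⟨i, by omega⟩)
    (hl1' : ∀ i, 0 ≤ l1 i)
    (hm1 : ∀ i : ℕ, (h : i + 1 < n) → m1 ⟨i + 1, h⟩ ≤ m1 ⟨i, by omega⟩)
    (hm1' : ∀ i, 0 ≤ m1 i) :
    ((∑ i : Fin n, (l0 i - m0 i) • ε i) + (∑ j : Fin n, (l1 j - m1 j) • δ j)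
        ∈ AddSubmonoid.closure (oddRset n M ε δ)) ↔
      ((∀ k : ℕ, 1 ≤ k → k ≤ 2 * n - 1 →
          shuffledPartialSum n m1 m0 k ≤ shuffledPartialSum n l1 l0 k) ∧
       (∃ m : ℕ,
          shuffledPartialSum n l1 l0 (2 * n) - shuffledPartialSum n m1 m0 (2 * n)
            = 2 * (m : ℤ)) ∧
       (shuffledPartialSum n m1 m0 (2 * n) - 2 * m0 ⟨n - 1, by omega⟩
          ≤ shuffledPartialSum n l1 l0 (2 * n) - 2 * l0 ⟨n - 1, by omega⟩)) := by
  have hn1 : n - 1 < n := by omega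
  set i0 : Fin n := ⟨n - 1, hn1⟩ with hi0
  have hPd : ∀ K : ℕ, shuffledPartialSum n l1 l0 K - shuffledPartialSum n m1 m0 K
      = (∑ j : Fin n, if 2 * (j : ℕ) + 1 ≤ K then l1 j - m1 j else 0)
        + (∑ i : Fin n, if 2 * (i : ℕ) + 2 ≤ K then l0 i - m0 i else 0) := by
    intro K
    simp only [shuffledPartialSum, add_sub_add_comm, ← Finset.sum_sub_distrib]
    congr 1 <;> refine Finset.sum_congr rfl fun _ _ => ?_ <;> split <;> simp
  have hPdtop : shuffledPartialSum n l1 l0 (2 * n) - shuffledPartialSum n m1 m0 (2 * n)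
      = (∑ j : Fin n, (l1 j - m1 j)) + (∑ i : Fin n, (l0 i - m0 i)) := by
    rw [hPd]
    congr 1 <;> refine Finset.sum_congr rfl fun i _ => if_pos (by omega)
  constructor
  · -- forward direction
    intro hmem
    have hval : ∀ φ : M →ₗ[ℚ] ℚ,
        φ ((∑ i : Fin n, (l0 i - m0 i) • ε i) + (∑ j : Fin n, (l1 j - m1 j) • δ j))
          = (∑ i : Fin n, ((l0 i - m0 i : ℤ) : ℚ) * φ (ε i))
            + (∑ j : Fin n, ((l1 j - m1 j : ℤ) : ℚ) * φ (δ j)) := by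
      intro φ
      rw [map_add, map_sum, map_sum]
      congr 1 <;> exact Finset.sum_congr rfl fun i _ => by rw [map_zsmul, zsmul_eq_mul]
    refine ⟨?_, ?_, ?_⟩
    · -- (1) partial-sum inequalities
      intro k hk1 hk2
      obtain ⟨φ, hφε, hφδ⟩ := exists_functional hli
        (Sum.elim (fun i => if 2 * (i : ℕ) + 2 ≤ k then (1 : ℚ) else 0)
                  (fun j => if 2 * (j : ℕ) + 1 ≤ k then (1 : ℚ) else 0))
      simp only [Sum.elim_inl, Sum.elim_inr] at hφε hφδ
      have hgen : ∀ r ∈ oddRset n M ε δ, 0 ≤ φ r := by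
        intro r hr
        simp only [oddRset, Set.mem_union, Set.mem_setOf_eq] at hr
        rcases hr with (⟨i, j, rfl⟩ | ⟨i, j, hij, rfl⟩) | ⟨i, j, hij, rfl⟩
        · rw [map_add, hφε, hφδ]; split_ifs <;> norm_num
        · rw [map_sub, hφε, hφδ]
          have hij' : (i : ℕ) < (j : ℕ) := hij
          split_ifs <;> first | (exfalso; omega) | norm_num
        · rw [map_sub, hφδ, hφε]
          have hij' : (i : ℕ) ≤ (j : ℕ) := hij
          split_ifs <;> first | (exfalso; omega) | norm_num
      have h0 := closure_nonneg φ hgen hmem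
      rw [hval] at h0
      have hv2 : (∑ i : Fin n, ((l0 i - m0 i : ℤ) : ℚ) * φ (ε i))
          + (∑ j : Fin n, ((l1 j - m1 j : ℤ) : ℚ) * φ (δ j))
          = ((shuffledPartialSum n l1 l0 k - shuffledPartialSum n m1 m0 k : ℤ) : ℚ) := by
        rw [hPd k, Int.cast_add, Int.cast_sum, Int.cast_sum, add_comm]
        congr 1 <;> refine Finset.sum_congr rfl fun i _ => ?_
        · rw [hφδ]; split_ifs <;> simp
        · rw [hφε]; split_ifs <;> simp
      rw [hv2] at h0
      have : (0 : ℤ) ≤ shuffledPartialSum n l1 l0 k - shuffledPartialSum n m1 m0 k := by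
        exact_mod_cast h0
      omega
    · -- (2) evenness
      obtain ⟨φ, hφε, hφδ⟩ := exists_functional hli
        (Sum.elim (fun _ => (1 : ℚ)) (fun _ => (1 : ℚ)))
      simp only [Sum.elim_inl, Sum.elim_inr] at hφε hφδ
      have hgen : ∀ r ∈ oddRset n M ε δ, ∃ m : ℕ, φ r = 2 * m := by
        intro r hr
        simp only [oddRset, Set.mem_union, Set.mem_setOf_eq] at hr
        rcases hr with (⟨i, j, rfl⟩ | ⟨i, j, hij, rfl⟩) | ⟨i, j, hij, rfl⟩
        · exact ⟨1, by rw [map_add, hφε, hφδ]; norm_num⟩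
        · exact ⟨0, by rw [map_sub, hφε, hφδ]; norm_num⟩
        · exact ⟨0, by rw [map_sub, hφδ, hφε]; norm_num⟩
      obtain ⟨m, hm⟩ := closure_even φ hgen hmem
      refine ⟨m, ?_⟩
      rw [hval] at hm
      simp only [hφε, hφδ, mul_one] at hm
      have hm' : (∑ i : Fin n, (l0 i - m0 i)) + (∑ j : Fin n, (l1 j - m1 j))
          = 2 * (m : ℤ) := by exact_mod_cast hm
      rw [hPdtop]; linarith
    · -- (3) last inequality
      obtain ⟨φ, hφε, hφδ⟩ := exists_functional hli
        (Sum.elim (fun i => if i = i0 then (-1 : ℚ) else 1) (fun _ => (1 : ℚ)))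
      simp only [Sum.elim_inl, Sum.elim_inr] at hφε hφδ
      have hgen : ∀ r ∈ oddRset n M ε δ, 0 ≤ φ r := by
        intro r hr
        simp only [oddRset, Set.mem_union, Set.mem_setOf_eq] at hr
        rcases hr with (⟨i, j, rfl⟩ | ⟨i, j, hij, rfl⟩) | ⟨i, j, hij, rfl⟩
        · rw [map_add, hφε, hφδ]; split_ifs <;> norm_num
        · rw [map_sub, hφε, hφδ]
          have hne : i ≠ i0 := by
            have hij' : (i : ℕ) < (j : ℕ) := hij
            have hj : (j : ℕ) < n := j.isLt
            intro h
            have : (i : ℕ) = n - 1 := by rw [h]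
            omega
          rw [if_neg hne]; norm_num
        · rw [map_sub, hφδ, hφε]; split_ifs <;> norm_num
      have h0 := closure_nonneg φ hgen hmem
      rw [hval] at h0
      simp only [hφε, hφδ, mul_one] at h0
      have hsplit : (∑ i : Fin n, ((l0 i - m0 i : ℤ) : ℚ) * (if i = i0 then (-1 : ℚ) else 1))
          = (∑ i : Fin n, ((l0 i - m0 i : ℤ) : ℚ)) - 2 * ((l0 i0 - m0 i0 : ℤ) : ℚ) := by
        have hc : ∀ i ∈ Finset.univ, ((l0 i - m0 i : ℤ) : ℚ) * (if i = i0 then (-1 : ℚ) else 1)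
            = ((l0 i - m0 i : ℤ) : ℚ)
              - (if i = i0 then 2 * ((l0 i - m0 i : ℤ) : ℚ) else 0) := by
          intro i _; split_ifs <;> ring
        rw [Finset.sum_congr rfl hc, Finset.sum_sub_distrib,
          Fintype.sum_ite_eq' i0 (fun i => 2 * ((l0 i - m0 i : ℤ) : ℚ))]
      rw [hsplit] at h0
      have h0' : (0 : ℤ) ≤ ((∑ i : Fin n, (l0 i - m0 i)) - 2 * (l0 i0 - m0 i0))
          + (∑ j : Fin n, (l1 j - m1 j)) := by exact_mod_cast h0
      show shuffledPartialSum n m1 m0 (2 * n) - 2 * m0 i0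
          ≤ shuffledPartialSum n l1 l0 (2 * n) - 2 * l0 i0
      have := hPdtop
      linarith
  · -- backward direction
    rintro ⟨h1, ⟨s, hs⟩, h3⟩
    have h3' : shuffledPartialSum n m1 m0 (2 * n) - 2 * m0 i0
        ≤ shuffledPartialSum n l1 l0 (2 * n) - 2 * l0 i0 := h3
    set q : ℕ → ℤ := auxQ n (fun i => l0 i - m0 i) (fun j => l1 j - m1 j) with hq
    set x : ℕ → M := auxX n ε δ with hx
    have hP : ∀ K : ℕ, K ≤ 2 * n → ∑ p ∈ range K, q p
        = shuffledPartialSum n l1 l0 K - shuffledPartialSum n m1 m0 K := by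
      intro K hK
      rw [hq, auxQ_partial _ _ hK, hPd K]
    have hv : (∑ i : Fin n, (l0 i - m0 i) • ε i) + (∑ j : Fin n, (l1 j - m1 j) • δ j)
        = ∑ p ∈ range (2 * n), q p • x p := by
      have e1 : ∑ i : Fin n, (l0 i - m0 i) • ε i
          = ∑ p ∈ range n, q (2 * p + 1) • x (2 * p + 1) := by
        rw [← Fin.sum_univ_eq_sum_range (fun p => q (2 * p + 1) • x (2 * p + 1)) n]
        refine Finset.sum_congr rfl fun i _ => ?_
        rw [hq, hx, auxQ_odd _ _ i.isLt, auxX_odd ε δ i.isLt]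
      have e2 : ∑ j : Fin n, (l1 j - m1 j) • δ j
          = ∑ p ∈ range n, q (2 * p) • x (2 * p) := by
        rw [← Fin.sum_univ_eq_sum_range (fun p => q (2 * p) • x (2 * p)) n]
        refine Finset.sum_congr rfl fun j _ => ?_
        rw [hq, hx, auxQ_even _ _ j.isLt, auxX_even ε δ j.isLt]
      rw [e1, e2, sum_range_double' (fun p => q p • x p) n, ← Finset.sum_add_distrib]
      exact Finset.sum_congr rfl fun p _ => add_comm _ _
    rw [hv, abel_summation q x (2 * n)]
    have hx0 : x (2 * n) = 0 := by rw [hx]; exact auxX_top ε δ le_rfl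
    rw [hx0, smul_zero, add_zero,
      show 2 * n = (2 * n - 2) + 1 + 1 from by omega, sum_range_succ, sum_range_succ]
    have hxa : x (2 * n - 2) = δ i0 := by
      rw [hx, show 2 * n - 2 = 2 * (n - 1) from by omega]; exact auxX_even ε δ hn1
    have hxb : x (2 * n - 2 + 1) = ε i0 := by
      rw [hx, show 2 * n - 2 + 1 = 2 * (n - 1) + 1 from by omega]; exact auxX_odd ε δ hn1
    have hxc : x (2 * n - 2 + 1 + 1) = 0 := by
      rw [hx]; exact auxX_top ε δ (by omega)
    rw [hxa, hxb, hxc, sub_zero]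
    have hq21 : (∑ j ∈ range (2 * n - 2 + 1), q j)
        = shuffledPartialSum n l1 l0 (2 * n - 1) - shuffledPartialSum n m1 m0 (2 * n - 1) := by
      rw [show 2 * n - 2 + 1 = 2 * n - 1 from by omega]; exact hP _ (by omega)
    have hq22 : (∑ j ∈ range (2 * n - 2 + 1 + 1), q j)
        = shuffledPartialSum n l1 l0 (2 * n) - shuffledPartialSum n m1 m0 (2 * n) := by
      rw [show 2 * n - 2 + 1 + 1 = 2 * n from by omega]; exact hP _ le_rfl
    have hqlast : q (2 * n - 2 + 1) = l0 i0 - m0 i0 := by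
      rw [hq, show 2 * n - 2 + 1 = 2 * (n - 1) + 1 from by omega, auxQ_odd _ _ hn1]
    have hstep : (∑ j ∈ range (2 * n - 2 + 1 + 1), q j)
        = (∑ j ∈ range (2 * n - 2 + 1), q j) + (l0 i0 - m0 i0) := by
      rw [sum_range_succ, hqlast]
    have hcge : 0 ≤ (∑ j ∈ range (2 * n - 2 + 1), q j) - (s : ℤ) := by
      have h2s : (∑ j ∈ range (2 * n - 2 + 1 + 1), q j) = 2 * (s : ℤ) := by rw [hq22, hs]
      omega
    have hfin : (∑ j ∈ range (2 * n - 2 + 1), q j) • (δ i0 - ε i0)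
          + (∑ j ∈ range (2 * n - 2 + 1 + 1), q j) • ε i0
        = ((∑ j ∈ range (2 * n - 2 + 1), q j) - (s : ℤ)) • (δ i0 - ε i0)
          + (s : ℤ) • (ε i0 + δ i0) := by
      have h2s : (∑ j ∈ range (2 * n - 2 + 1 + 1), q j) = (s : ℤ) + (s : ℤ) := by
        rw [hq22, hs]; ring
      rw [h2s, sub_smul, smul_sub, smul_sub, smul_add, add_smul]
      abel
    rw [add_assoc, hfin, ← add_assoc]
    have memUnion1 : ∀ i j : Fin n, ε i + δ j ∈ oddRset n M ε δ := by
      intro i j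
      simp only [oddRset, Set.mem_union, Set.mem_setOf_eq]
      exact Or.inl (Or.inl ⟨i, j, rfl⟩)
    have memUnion2 : ∀ i j : Fin n, i < j → ε i - δ j ∈ oddRset n M ε δ := by
      intro i j hij
      simp only [oddRset, Set.mem_union, Set.mem_setOf_eq]
      exact Or.inl (Or.inr ⟨i, j, hij, rfl⟩)
    have memUnion3 : ∀ i j : Fin n, i ≤ j → δ i - ε j ∈ oddRset n M ε δ := by
      intro i j hij
      simp only [oddRset, Set.mem_union, Set.mem_setOf_eq]
      exact Or.inr ⟨i, j, hij, rfl⟩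
    have smulmem : ∀ (c : ℤ) (y : M), 0 ≤ c → y ∈ oddRset n M ε δ →
        c • y ∈ AddSubmonoid.closure (oddRset n M ε δ) := by
      intro c y hc hy
      obtain ⟨c', rfl⟩ : ∃ c' : ℕ, c = (c' : ℤ) := ⟨c.toNat, (Int.toNat_of_nonneg hc).symm⟩
      rw [natCast_zsmul]
      exact nsmul_mem (AddSubmonoid.subset_closure hy) c'
    refine AddSubmonoid.add_mem _ (AddSubmonoid.add_mem _ ?_ ?_) ?_
    · -- main sum
      refine AddSubmonoid.sum_mem _ fun k hk => ?_
      rw [Finset.mem_range] at hk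
      have hcoef : 0 ≤ ∑ j ∈ range (k + 1), q j := by
        rw [hP (k + 1) (by omega)]
        have := h1 (k + 1) (by omega) (by omega)
        omega
      refine smulmem _ _ hcoef ?_
      rcases Nat.even_or_odd k with ⟨p, hpk⟩ | ⟨p, hpk⟩
      · have hpn : p < n := by omega
        have e1 : x k = δ ⟨p, hpn⟩ := by
          rw [hx, show k = 2 * p from by omega]; exact auxX_even ε δ hpn
        have e2 : x (k + 1) = ε ⟨p, hpn⟩ := by
          rw [hx, show k + 1 = 2 * p + 1 from by omega]; exact auxX_odd ε δ hpn
        rw [e1, e2]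
        exact memUnion3 _ _ le_rfl
      · have hpn : p + 1 < n := by omega
        have hpn' : p < n := by omega
        have e1 : x k = ε ⟨p, hpn'⟩ := by
          rw [hx, show k = 2 * p + 1 from by omega]; exact auxX_odd ε δ hpn'
        have e2 : x (k + 1) = δ ⟨p + 1, hpn⟩ := by
          rw [hx, show k + 1 = 2 * (p + 1) from by omega]; exact auxX_even ε δ hpn
        rw [e1, e2]
        exact memUnion2 _ _ (by exact Fin.mk_lt_mk.mpr (by omega))
    · -- the `c • (δ - ε)` term
      refine smulmem _ _ hcge (memUnion3 _ _ le_rfl)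
    · -- the `s • (ε + δ)` term
      refine smulmem _ _ (by positivity) (memUnion1 _ _)
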